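/- Let m ∈ ℕ and define F(s) := s^m · ∏_{n=0}^∞ E_{d'}(s/z_n²)^{k_n}. Then for every complex s with s ≠ 0 and s ≠ z_n² for all n, the logarithmic derivative of F at s equals m/s − A(s); equivalently, −(d/ds) log F(s) = −m/s + ∑_{n=0}^∞ k_n·s^{d'}/(z_n^{2d'}·(z_n² − s)). -/

import Mathlib

/-- The Weierstrass elementary factor: `E 0 w = 1 - w` and
`E p w = (1 - w) * exp (∑_{k=1}^p w^k / k)` for `p ≥ 1`. -/
noncomputable def elemFactor (p : ℕ) (w : ℂ) : ℂ :=
  (1 - w) * Complex.exp (∑ k ∈ Finset.Icc 1 p, w ^ k / (k : ℂ))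

open Complex Finset


noncomputable def ellS (p : ℕ) (w : ℂ) : ℂ := ∑ j ∈ Finset.Icc 1 p, w ^ j / (j : ℂ)

noncomputable def ell (p : ℕ) (w : ℂ) : ℂ := Complex.log (1 - w) + ellS p w

lemma range_succ_eq_insert_Icc (p : ℕ) : Finset.range (p + 1) = insert 0 (Finset.Icc 1 p) := by
  ext j; simp [Nat.lt_succ_iff, Nat.one_le_iff_ne_zero]; omega

lemma logTaylor_neg (p : ℕ) (w : ℂ) : Complex.logTaylor (p + 1) (-w) = -ellS p w := by
  rw [Complex.logTaylor, range_succ_eq_insert_Icc, Finset.sum_insert (by simp)]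
  have h0 : ((-1:ℂ)) ^ (0+1) * (-w) ^ 0 / ((0:ℕ):ℂ) = 0 := by simp
  rw [h0, zero_add, ellS, ← Finset.sum_neg_distrib]
  refine Finset.sum_congr rfl fun j hj => ?_
  have hpow : (-w)^j = (-1:ℂ)^j * w^j := by rw [neg_pow]
  rw [hpow]
  have h1 : ((-1:ℂ))^(j+1) * ((-1:ℂ)^j * w^j) = -w^j := by
    rw [← mul_assoc, ← pow_add]
    have h2 : (-1:ℂ)^(j + 1 + j) = -1 := by
      rw [show j+1+j = 2*j+1 by ring, pow_succ, pow_mul]; simp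
    rw [h2]; ring
  rw [h1, neg_div]

lemma norm_ell_le (p : ℕ) {w : ℂ} (hw : ‖w‖ ≤ 1/2) : ‖ell p w‖ ≤ 2 * ‖w‖ ^ (p + 1) := by
  have hw1 : ‖w‖ < 1 := lt_of_le_of_lt hw (by norm_num)
  have h := Complex.norm_log_sub_logTaylor_le p (z := -w) (by simpa using hw1)
  rw [logTaylor_neg] at h
  simp only [norm_neg, ← sub_eq_add_neg, sub_neg_eq_add] at h
  rw [ell, ellS]
  refine h.trans ?_
  have h2 : (1 - ‖w‖)⁻¹ ≤ 2 := by
    rw [show (2:ℝ) = (1/2 : ℝ)⁻¹ by norm_num]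
    exact inv_anti₀ (by norm_num) (by linarith)
  have hnn : (0:ℝ) ≤ ‖w‖ ^ (p+1) := by positivity
  have hb : (0:ℝ) ≤ (1 - ‖w‖)⁻¹ := inv_nonneg.2 (by linarith)
  calc ‖w‖ ^ (p+1) * (1 - ‖w‖)⁻¹ / (p+1)
      ≤ ‖w‖ ^ (p+1) * (1 - ‖w‖)⁻¹ := div_le_self (mul_nonneg hnn hb) (by push_cast; linarith)
    _ ≤ ‖w‖ ^ (p+1) * 2 := mul_le_mul_of_nonneg_left h2 hnn
    _ = 2 * ‖w‖ ^ (p+1) := mul_comm _ _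

lemma one_sub_mem_slitPlane {w : ℂ} (hw : ‖w‖ < 1) : 1 - w ∈ Complex.slitPlane := by
  rw [Complex.mem_slitPlane_iff]
  left
  simp only [Complex.sub_re, Complex.one_re]
  have hre : w.re ≤ ‖w‖ := Complex.re_le_norm w
  linarith

lemma one_sub_ne_zero_of_norm_lt_one {w : ℂ} (hw : ‖w‖ < 1) : 1 - w ≠ 0 :=
  Complex.slitPlane_ne_zero (one_sub_mem_slitPlane hw)

lemma hasDerivAt_ellS (p : ℕ) (w : ℂ) :
    HasDerivAt (ellS p) (∑ j ∈ Finset.Icc 1 p, w ^ (j - 1)) w := by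
  unfold ellS
  refine HasDerivAt.fun_sum fun j hj => ?_
  have hj1 : j ≠ 0 := by have := (Finset.mem_Icc.mp hj).1; omega
  have h := (hasDerivAt_pow j w).div_const (j : ℂ)
  have he : (↑j * w ^ (j - 1)) / (j : ℂ) = w ^ (j - 1) := by
    rw [mul_comm, mul_div_assoc, div_self (by exact_mod_cast hj1), mul_one]
  rw [he] at h
  exact h

lemma geom_Icc (p : ℕ) (w : ℂ) :
    (1 - w) * ∑ j ∈ Finset.Icc 1 p, w ^ (j - 1) = 1 - w ^ p := by
  have h : ∑ j ∈ Finset.Icc 1 p, w ^ (j - 1) = ∑ j ∈ Finset.range p, w ^ j := by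
    rw [show Finset.Icc 1 p = Finset.Ico 1 (p+1) by rfl, Finset.sum_Ico_eq_sum_range]
    simp
  rw [h]
  have := geom_sum_mul w p
  linear_combination -this

lemma hasDerivAt_ell (p : ℕ) {w : ℂ} (hw : ‖w‖ < 1) :
    HasDerivAt (ell p) (-w ^ p / (1 - w)) w := by
  have h1 : HasDerivAt (fun v : ℂ => (1:ℂ) - v) (-1) w := (hasDerivAt_id w).const_sub 1
  have h2 : HasDerivAt (fun v : ℂ => Complex.log (1 - v)) ((-1) / (1 - w)) w :=
    h1.clog (one_sub_mem_slitPlane hw)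
  have h3 := h2.add (hasDerivAt_ellS p w)
  have hne : (1:ℂ) - w ≠ 0 := one_sub_ne_zero_of_norm_lt_one hw
  have hval : (-1) / (1 - w) + ∑ j ∈ Finset.Icc 1 p, w ^ (j - 1) = -w ^ p / (1 - w) := by
    have hg := geom_Icc p w
    field_simp
    linear_combination hg
  rw [hval] at h3
  exact h3

lemma hasDerivAt_elemFactor (p : ℕ) (w : ℂ) :
    HasDerivAt (elemFactor p) (-w ^ p * Complex.exp (ellS p w)) w := by
  have h1 : HasDerivAt (fun v : ℂ => (1:ℂ) - v) (-1) w := (hasDerivAt_id w).const_sub 1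
  have h2 : HasDerivAt (fun v : ℂ => Complex.exp (ellS p v))
      (Complex.exp (ellS p w) * ∑ j ∈ Finset.Icc 1 p, w ^ (j - 1)) w :=
    (Complex.hasDerivAt_exp _).comp w (hasDerivAt_ellS p w)
  have h3 := h1.mul h2
  have hval : (-1) * Complex.exp (ellS p w) +
      (1 - w) * (Complex.exp (ellS p w) * ∑ j ∈ Finset.Icc 1 p, w ^ (j - 1))
      = -w ^ p * Complex.exp (ellS p w) := by
    have hg := geom_Icc p w
    linear_combination Complex.exp (ellS p w) * hg
  rw [hval] at h3
  have : elemFactor p = fun v : ℂ => (1 - v) * Complex.exp (ellS p v) := by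
    funext v; rfl
  rw [this]
  exact h3

lemma elemFactor_ne_zero {p : ℕ} {w : ℂ} (hw : w ≠ 1) : elemFactor p w ≠ 0 :=
  mul_ne_zero (sub_ne_zero.2 (fun h => hw (by linear_combination -h))) (Complex.exp_ne_zero _)

lemma exp_ell (p : ℕ) {w : ℂ} (hw : w ≠ 1) : Complex.exp (ell p w) = elemFactor p w := by
  rw [ell, Complex.exp_add, Complex.exp_log (sub_ne_zero.2 (fun h => hw (by linear_combination -h)))]
  rfl

lemma logDeriv_congr_nhds_apply {f g : ℂ → ℂ} {x : ℂ} (h : f =ᶠ[nhds x] g) :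
    logDeriv f x = logDeriv g x := by
  rw [logDeriv_apply, logDeriv_apply, h.deriv_eq, h.self_of_nhds]

lemma alg1 (K s Zc : ℂ) (p : ℕ) (hZ : Zc ≠ 0) (hZs : Zc - s ≠ 0) :
    K * (-(s / Zc) ^ p / (1 - s / Zc) * Zc⁻¹) = -(K * s ^ p / (Zc ^ p * (Zc - s))) := by
  have h1 : (1:ℂ) - s / Zc ≠ 0 := by
    rw [show (1:ℂ) - s / Zc = (Zc - s) / Zc by field_simp]
    exact div_ne_zero hZs hZ
  field_simp
  have hp : Zc ^ p * Zc⁻¹ ^ p = 1 := by rw [← mul_pow, mul_inv_cancel₀ hZ, one_pow]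
  linear_combination (-(K * s ^ p)) * hp

lemma alg2 (K s Zc E : ℂ) (p : ℕ) (hE : E ≠ 0) (hZ : Zc ≠ 0) (hZs : Zc - s ≠ 0) :
    K * (-(s / Zc) ^ p * E * Zc⁻¹ / ((1 - s / Zc) * E)) = -(K * s ^ p / (Zc ^ p * (Zc - s))) := by
  have h1 : (1:ℂ) - s / Zc ≠ 0 := by
    rw [show (1:ℂ) - s / Zc = (Zc - s) / Zc by field_simp]
    exact div_ne_zero hZs hZ
  field_simp
  have hp : Zc ^ p * Zc⁻¹ ^ p = 1 := by rw [← mul_pow, mul_inv_cancel₀ hZ, one_pow]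
  linear_combination (-(K * s ^ p)) * hp


/-- For `F s = s ^ m * ∏' n, E d' (s / z n ^ 2) ^ k n` and every `s` with `s ≠ 0` and
`s ≠ z n ^ 2` for all `n`, the logarithmic derivative of `F` at `s` equals `m/s - A s`,
i.e. `-(d/ds) log F s = -m/s + ∑' n, k n * s ^ d' / (z n ^ (2 d') * (z n ^ 2 - s))`. -/
theorem logDeriv_hadamard (d' : ℕ) (z : ℕ → ℝ) (hzinj : Function.Injective z)
    (hzpos : ∀ n, 0 < z n) (hztop : Filter.Tendsto z Filter.atTop Filter.atTop)
    (k : ℕ → ℕ) (hk : ∀ n, 0 < k n)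
    (hsum : Summable fun n => (k n : ℝ) / z n ^ (2 * (d' + 1))) (m : ℕ) :
    ∀ s : ℂ, s ≠ 0 → (∀ n, s ≠ (z n : ℂ) ^ 2) →
      logDeriv (fun s : ℂ => s ^ m * ∏' n, elemFactor d' (s / (z n : ℂ) ^ 2) ^ k n) s
        = (m : ℂ) / s
          - ∑' n, (k n : ℂ) * s ^ d' / ((z n : ℂ) ^ (2 * d') * ((z n : ℂ) ^ 2 - s)) := by
  intro s hs0 hsz
  have hz0 : ∀ n, (z n : ℂ) ≠ 0 := fun n => by exact_mod_cast (hzpos n).ne'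
  have hZ0 : ∀ n, ((z n : ℂ)) ^ 2 ≠ 0 := fun n => pow_ne_zero 2 (hz0 n)
  have hZs : ∀ n, ((z n : ℂ)) ^ 2 - s ≠ 0 := fun n => sub_ne_zero.2 fun h => (hsz n) h.symm
  have hw1 : ∀ n, s / (z n : ℂ) ^ 2 ≠ 1 :=
    fun n h => hsz n ((div_eq_one_iff_eq (hZ0 n)).mp h)
  set R : ℝ := ‖s‖ + 1 with hRdef
  have hR0 : 0 < R := by positivity
  obtain ⟨N, hN⟩ := Filter.eventually_atTop.1 (hztop.eventually_ge_atTop (max 1 (2*R)))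
  have hz2 : ∀ n, N ≤ n → 2*R ≤ z n ^ 2 := fun n hn => by
    have h := hN n hn
    have h1 : 1 ≤ z n := le_trans (le_max_left _ _) h
    have h2 : 2*R ≤ z n := le_trans (le_max_right _ _) h
    nlinarith
  have hUo : IsOpen (Metric.ball s 1) := Metric.isOpen_ball
  have hsU : s ∈ Metric.ball s 1 := Metric.mem_ball_self one_pos
  have hnormU : ∀ w ∈ Metric.ball s 1, ‖w‖ < R := fun w hw => by
    have h : ‖w - s‖ < 1 := by simpa [dist_eq_norm] using hw
    calc ‖w‖ = ‖s + (w - s)‖ := by ring_nf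
      _ ≤ ‖s‖ + ‖w - s‖ := norm_add_le _ _
      _ < R := by rw [hRdef]; linarith
  have hZnorm : ∀ n, ‖((z n : ℂ))^2‖ = z n ^ 2 := fun n => by
    rw [norm_pow, Complex.norm_real, Real.norm_eq_abs, abs_of_pos (hzpos n)]
  have hsmall : ∀ i, ∀ w ∈ Metric.ball s 1, ‖w / (z (i+N) : ℂ)^2‖ < 1/2 := fun i w hw => by
    have hz2' := hz2 (i+N) (by omega)
    rw [norm_div, hZnorm]
    rw [div_lt_iff₀ (by nlinarith)]
    have := hnormU w hw
    nlinarith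
  -- the log-summands of the tail and the bounds
  have hu : Summable (fun i => 2 * R^(d'+1) * ((k (i+N) : ℝ) / z (i+N) ^ (2*(d'+1)))) :=
    ((summable_nat_add_iff N).2 hsum).mul_left _
  have hcb : ∀ i, ∀ w ∈ Metric.ball s 1,
      ‖(k (i+N) : ℂ) * ell d' (w / (z (i+N) : ℂ)^2)‖
        ≤ 2 * R^(d'+1) * ((k (i+N) : ℝ) / z (i+N) ^ (2*(d'+1))) := fun i w hw => by
    have hsm := (hsmall i w hw).le
    have hell := norm_ell_le d' hsm
    have hz2' := hz2 (i+N) (by omega)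
    have hzpos' := hzpos (i+N)
    have hzpos2 : (0:ℝ) < z (i+N)^2 := by nlinarith
    have hvle : ‖w / (z (i+N) : ℂ)^2‖ ≤ R / z (i+N)^2 := by
      rw [norm_div, hZnorm]
      exact (div_le_div_iff_of_pos_right hzpos2).2 (hnormU w hw).le
    have hpow : ‖w / (z (i+N) : ℂ)^2‖ ^ (d'+1) ≤ (R / z (i+N)^2) ^ (d'+1) := by
      gcongr
    rw [norm_mul, Complex.norm_natCast]
    calc (k (i+N) : ℝ) * ‖ell d' (w / (z (i+N) : ℂ)^2)‖
        ≤ (k (i+N) : ℝ) * (2 * ‖w / (z (i+N) : ℂ)^2‖ ^ (d'+1)) := by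
          exact mul_le_mul_of_nonneg_left hell (Nat.cast_nonneg _)
      _ ≤ (k (i+N) : ℝ) * (2 * (R / z (i+N)^2) ^ (d'+1)) := by
          refine mul_le_mul_of_nonneg_left (mul_le_mul_of_nonneg_left hpow (by norm_num))
            (Nat.cast_nonneg _)
      _ = 2 * R^(d'+1) * ((k (i+N) : ℝ) / z (i+N) ^ (2*(d'+1))) := by
          rw [div_pow, ← pow_mul]
          rw [show z (i+N) ^ (2*(d'+1)) = z (i+N) ^ (2*(d'+1)) from rfl]
          field_simp
  have hcd' : ∀ i, ∀ w ∈ Metric.ball s 1,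
      HasDerivAt (fun w => (k (i+N) : ℂ) * ell d' (w / (z (i+N) : ℂ)^2))
        ((k (i+N) : ℂ) * (-(w / (z (i+N) : ℂ)^2)^d' / (1 - w/(z (i+N) : ℂ)^2)
          * (((z (i+N) : ℂ))^2)⁻¹)) w := fun i w hw => by
    have hdiv : HasDerivAt (fun x : ℂ => x / (z (i+N) : ℂ)^2) ((((z (i+N) : ℂ))^2)⁻¹) w := by
      simpa [one_div] using (hasDerivAt_id w).div_const ((z (i+N) : ℂ)^2)
    have hELL := (hasDerivAt_ell d' (lt_trans (hsmall i w hw) (by norm_num))).comp w hdiv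
    exact hELL.const_mul _
  have hcd : ∀ i, DifferentiableOn ℂ (fun w => (k (i+N) : ℂ) * ell d' (w / (z (i+N) : ℂ)^2))
      (Metric.ball s 1) :=
    fun i w hw => ((hcd' i w hw).differentiableAt).differentiableWithinAt
  have hTdiff : DifferentiableOn ℂ
      (fun w => ∑' i, (k (i+N) : ℂ) * ell d' (w / (z (i+N) : ℂ)^2)) (Metric.ball s 1) :=
    Complex.differentiableOn_tsum_of_summable_norm hu hcd hUo hcb
  have hTderiv : HasSum (fun i => deriv (fun w => (k (i+N) : ℂ) * ell d' (w / (z (i+N) : ℂ)^2)) s)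
      (deriv (fun w => ∑' i, (k (i+N) : ℂ) * ell d' (w / (z (i+N) : ℂ)^2)) s) :=
    Complex.hasSum_deriv_of_summable_norm hu hcd hUo hcb hsU
  have hZpow : ∀ n, ((z n : ℂ))^(2*d') = (((z n : ℂ))^2)^d' := fun n => by rw [← pow_mul]
  have hcderiv : ∀ i, deriv (fun w => (k (i+N) : ℂ) * ell d' (w / (z (i+N) : ℂ)^2)) s
      = -((k (i+N) : ℂ) * s ^ d' / ((z (i+N) : ℂ) ^ (2*d') * ((z (i+N) : ℂ)^2 - s))) := fun i => by
    rw [(hcd' i s hsU).deriv, hZpow (i+N)]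
    exact alg1 _ _ _ _ (hZ0 (i+N)) (hZs (i+N))
  have hts : HasSum (fun i => (k (i+N) : ℂ) * s ^ d' / ((z (i+N) : ℂ) ^ (2*d') * ((z (i+N) : ℂ)^2 - s)))
      (-(deriv (fun w => ∑' i, (k (i+N) : ℂ) * ell d' (w / (z (i+N) : ℂ)^2)) s)) := by
    have h := hTderiv.neg
    simp_rw [hcderiv, neg_neg] at h
    exact h
  have hsummable_tt : Summable (fun n => (k n : ℂ) * s ^ d' / ((z n : ℂ) ^ (2*d') * ((z n : ℂ)^2 - s))) :=
    (summable_nat_add_iff N).1 hts.summable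
  -- elementary-factor pieces
  have hbase : ∀ n (w : ℂ), HasDerivAt (fun x : ℂ => elemFactor d' (x / (z n : ℂ)^2))
      (-(w/(z n : ℂ)^2)^d' * Complex.exp (ellS d' (w/(z n : ℂ)^2)) * (((z n : ℂ))^2)⁻¹) w := fun n w => by
    have hdiv : HasDerivAt (fun x : ℂ => x / (z n : ℂ)^2) ((((z n : ℂ))^2)⁻¹) w := by
      simpa [one_div] using (hasDerivAt_id w).div_const ((z n : ℂ)^2)
    exact (hasDerivAt_elemFactor d' _).comp w hdiv
  have hfnd : ∀ n (w : ℂ), DifferentiableAt ℂ (fun x => elemFactor d' (x / (z n : ℂ)^2) ^ k n) w :=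
    fun n w => ((hbase n w).differentiableAt).pow _
  have hfne : ∀ n, elemFactor d' (s / (z n : ℂ)^2) ^ k n ≠ 0 :=
    fun n => pow_ne_zero _ (elemFactor_ne_zero (hw1 n))
  have hlfn : ∀ n, logDeriv (fun x => elemFactor d' (x / (z n : ℂ)^2) ^ k n) s
      = -((k n : ℂ) * s ^ d' / ((z n : ℂ) ^ (2*d') * ((z n : ℂ)^2 - s))) := fun n => by
    rw [logDeriv_fun_pow ((hbase n s).differentiableAt) (k n)]
    rw [logDeriv_apply, (hbase n s).deriv]
    rw [show elemFactor d' (s/(z n : ℂ)^2)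
        = (1 - s/(z n : ℂ)^2) * Complex.exp (ellS d' (s/(z n : ℂ)^2)) from rfl]
    rw [hZpow n]
    exact alg2 _ _ _ _ _ (Complex.exp_ne_zero _) (hZ0 n) (hZs n)
  -- splitting the infinite product on the ball
  have hkey : ∀ w ∈ Metric.ball s 1, (∏' n, elemFactor d' (w / (z n : ℂ)^2) ^ k n)
      = (∏ n ∈ Finset.range N, elemFactor d' (w / (z n : ℂ)^2) ^ k n)
        * Complex.exp (∑' i, (k (i+N) : ℂ) * ell d' (w / (z (i+N) : ℂ)^2)) := fun w hw => by
    have hsumc : Summable (fun i => (k (i+N) : ℂ) * ell d' (w / (z (i+N) : ℂ)^2)) :=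
      Summable.of_norm_bounded hu (fun i => hcb i w hw)
    have hvne1 : ∀ i, w / (z (i+N) : ℂ)^2 ≠ 1 := fun i => by
      intro h
      have := hsmall i w hw
      rw [h] at this
      simp at this
      linarith
    have hexp : ∀ i, Complex.exp ((k (i+N) : ℂ) * ell d' (w / (z (i+N) : ℂ)^2))
        = elemFactor d' (w / (z (i+N) : ℂ)^2) ^ k (i+N) := fun i => by
      rw [Complex.exp_nat_mul, exp_ell d' (hvne1 i)]
    have hprod : HasProd (fun i => elemFactor d' (w / (z (i+N) : ℂ)^2) ^ k (i+N))
        (Complex.exp (∑' i, (k (i+N) : ℂ) * ell d' (w / (z (i+N) : ℂ)^2))) := by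
      have ht := hsumc.hasSum
      rw [HasSum] at ht
      have h2 := (Complex.continuous_exp.continuousAt (x := ∑' i, (k (i+N) : ℂ) * ell d' (w / (z (i+N) : ℂ)^2))).tendsto.comp ht
      rw [HasProd]
      refine h2.congr fun F => ?_
      simp only [Function.comp_apply]
      rw [Complex.exp_sum]
      exact Finset.prod_congr rfl fun i _ => hexp i
    rw [← Multipliable.prod_mul_tprod_nat_mul' (f := fun n => elemFactor d' (w / (z n : ℂ)^2) ^ k n)
      (k := N) hprod.multipliable, hprod.tprod_eq]
  -- eventual equality and final computation
  have hev : (fun w : ℂ => w ^ m * ∏' n, elemFactor d' (w / (z n : ℂ)^2) ^ k n) =ᶠ[nhds s]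
      (fun w => w ^ m * ((∏ n ∈ Finset.range N, elemFactor d' (w / (z n : ℂ)^2) ^ k n)
        * Complex.exp (∑' i, (k (i+N) : ℂ) * ell d' (w / (z (i+N) : ℂ)^2)))) := by
    filter_upwards [hUo.mem_nhds hsU] with w hw
    rw [hkey w hw]
  rw [logDeriv_congr_nhds_apply hev]
  have hdT : DifferentiableAt ℂ (fun w => ∑' i, (k (i+N) : ℂ) * ell d' (w / (z (i+N) : ℂ)^2)) s :=
    hTdiff.differentiableAt (hUo.mem_nhds hsU)
  have hdE : DifferentiableAt ℂ
      (fun w => Complex.exp (∑' i, (k (i+N) : ℂ) * ell d' (w / (z (i+N) : ℂ)^2))) s := hdT.cexp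
  have hdP : DifferentiableAt ℂ
      (fun w => ∏ n ∈ Finset.range N, elemFactor d' (w / (z n : ℂ)^2) ^ k n) s :=
    DifferentiableAt.fun_finsetProd (fun n _ => hfnd n s)
  have hPne : (∏ n ∈ Finset.range N, elemFactor d' (s / (z n : ℂ)^2) ^ k n) ≠ 0 :=
    Finset.prod_ne_zero_iff.2 (fun n _ => hfne n)
  have hEne : Complex.exp (∑' i, (k (i+N) : ℂ) * ell d' (s / (z (i+N) : ℂ)^2)) ≠ 0 :=
    Complex.exp_ne_zero _
  rw [logDeriv_mul (f := fun w : ℂ => w ^ m)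
    (g := fun w => (∏ n ∈ Finset.range N, elemFactor d' (w / (z n : ℂ)^2) ^ k n)
      * Complex.exp (∑' i, (k (i+N) : ℂ) * ell d' (w / (z (i+N) : ℂ)^2)))
    s (pow_ne_zero m hs0) (mul_ne_zero hPne hEne) (differentiableAt_pow m) (hdP.mul hdE)]
  rw [logDeriv_mul
    (f := fun w => ∏ n ∈ Finset.range N, elemFactor d' (w / (z n : ℂ)^2) ^ k n)
    (g := fun w => Complex.exp (∑' i, (k (i+N) : ℂ) * ell d' (w / (z (i+N) : ℂ)^2)))
    s hPne hEne hdP hdE]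
  rw [logDeriv_pow s m]
  rw [logDeriv_prod (s := Finset.range N) (f := fun n x => elemFactor d' (x / (z n : ℂ)^2) ^ k n) (x := s)
    (fun n _ => hfne n) (fun n _ => hfnd n s)]
  have hlE : logDeriv (fun w => Complex.exp (∑' i, (k (i+N) : ℂ) * ell d' (w / (z (i+N) : ℂ)^2))) s
      = deriv (fun w => ∑' i, (k (i+N) : ℂ) * ell d' (w / (z (i+N) : ℂ)^2)) s := by
    rw [logDeriv_apply, deriv_cexp hdT]
    field_simp [Complex.exp_ne_zero]
  rw [hlE]
  simp_rw [hlfn]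
  have hD : deriv (fun w => ∑' i, (k (i+N) : ℂ) * ell d' (w / (z (i+N) : ℂ)^2)) s
      = -∑' i, (k (i+N) : ℂ) * s ^ d' / ((z (i+N) : ℂ) ^ (2*d') * ((z (i+N) : ℂ)^2 - s)) := by
    have h := hts.tsum_eq
    linear_combination h
  rw [hD]
  have hsplit := Summable.sum_add_tsum_nat_add N hsummable_tt
  rw [Finset.sum_neg_distrib]
  linear_combination -hsplit
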